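/- Let (x, v) be a collision-free solution of the second-order singular Cucker–Smale system with critical exponent β = 1, coupling strength κ > 0, and initial data satisfying Σ_i x_i(0) = 0, Σ_i v_i(0) = 0 and x_i(0) ≠ x_j(0) for i ≠ j. Then unconditional flocking occurs with exponential rate: there exist an equilibrium state X^∞ = (x_1^∞, …, x_N^∞) ∈ ℝ^N and constants C, C', λ > 0 such that for all i and all t ≥ 0, |x_i(t) − x_i^∞| ≤ C·e^{−λt} and |v_i(t)| ≤ C'·e^{−λt}. -/

import Mathlib

open Real Filter Set Topology

/-- A collision-free solution of the second-order singular Cucker–Smale system on the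
real line at the critical exponent `β = 1`, i.e. with communication weight
`ψ(r) = 1/|r|`: `x_i' = v_i`, `v_i' = (κ/N) Σ_{j≠i} (v_j − v_i)/|x_j − x_i|`,
with no collisions. -/
def IsCFSol2Crit (N : ℕ) (κ : ℝ) (x v : ℝ → Fin N → ℝ) : Prop :=
  (∀ t ≥ (0:ℝ), ∀ i j : Fin N, i ≠ j → x t i ≠ x t j) ∧
  (∀ i, ∀ t ≥ (0:ℝ), HasDerivWithinAt (fun s => x s i) (v t i) (Set.Ici 0) t) ∧
  ∀ i, ∀ t ≥ (0:ℝ), HasDerivWithinAt (fun s => v s i)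
    ((κ / (N:ℝ)) * ∑ j ∈ Finset.univ.erase i,
      (v t j - v t i) / |x t j - x t i|) (Set.Ici 0) t

section helpers
variable {N : ℕ}

lemma erase_sum_swap (f : Fin N → Fin N → ℝ) :
    (∑ i, ∑ j ∈ Finset.univ.erase i, f i j) = ∑ i, ∑ j ∈ Finset.univ.erase i, f j i := by
  have h : ∀ g : Fin N → Fin N → ℝ, (∑ i, ∑ j ∈ Finset.univ.erase i, g i j)
      = ∑ i, ∑ j, if j ≠ i then g i j else 0 := by
    intro g
    refine Finset.sum_congr rfl fun i _ => ?_
    rw [← Finset.filter_ne', Finset.sum_filter]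
  rw [h, h, Finset.sum_comm]
  refine Finset.sum_congr rfl fun i _ => Finset.sum_congr rfl fun j _ => ?_
  by_cases hij : i = j
  · simp [hij]
  · simp [hij, Ne.symm hij]

lemma erase_sum_eq_full (f : Fin N → Fin N → ℝ) (hdiag : ∀ i, f i i = 0) :
    (∑ i, ∑ j ∈ Finset.univ.erase i, f i j) = ∑ i, ∑ j, f i j :=
  Finset.sum_congr rfl fun i _ => Finset.sum_erase _ (hdiag i)

lemma sym_identity (u : Fin N → ℝ) (w : Fin N → Fin N → ℝ)
    (hw : ∀ i j, w i j = w j i) :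
    (∑ i, ∑ j ∈ Finset.univ.erase i, u i * (u j - u i) * w i j)
      = -(1/2) * ∑ i, ∑ j ∈ Finset.univ.erase i, (u i - u j)^2 * w i j := by
  have hs := erase_sum_swap (fun i j => u i * (u j - u i) * w i j)
  have h2 : (∑ i, ∑ j ∈ Finset.univ.erase i, u i * (u j - u i) * w i j)
      + (∑ i, ∑ j ∈ Finset.univ.erase i, u i * (u j - u i) * w i j)
      = ∑ i, ∑ j ∈ Finset.univ.erase i, -((u i - u j)^2 * w i j) := by
    nth_rewrite 2 [hs]
    rw [← Finset.sum_add_distrib]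
    refine Finset.sum_congr rfl fun i _ => ?_
    rw [← Finset.sum_add_distrib]
    refine Finset.sum_congr rfl fun j _ => ?_
    rw [hw j i]; ring
  rw [Finset.sum_congr rfl (fun i _ => Finset.sum_neg_distrib _)] at h2
  rw [Finset.sum_neg_distrib] at h2
  linarith

lemma sum_sq_pairs (u : Fin N → ℝ) (hS : ∑ i, u i = 0) :
    (∑ i, ∑ j ∈ Finset.univ.erase i, (u i - u j)^2) = 2 * N * ∑ i, u i ^ 2 := by
  rw [erase_sum_eq_full _ (by simp)]
  have h1 : ∀ i, (∑ j, (u i - u j)^2)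
      = (N:ℝ) * u i ^ 2 - 2 * u i * (∑ j, u j) + ∑ j, u j ^ 2 := by
    intro i
    rw [Finset.sum_congr rfl (fun j _ => by ring :
      ∀ j ∈ Finset.univ, (u i - u j)^2 = u i ^ 2 - 2 * u i * u j + u j ^ 2)]
    rw [Finset.sum_add_distrib, Finset.sum_sub_distrib, Finset.sum_const,
      ← Finset.mul_sum, Finset.card_univ, Fintype.card_fin, nsmul_eq_mul]
  rw [Finset.sum_congr rfl (fun i _ => h1 i)]
  rw [Finset.sum_add_distrib, Finset.sum_sub_distrib, ← Finset.mul_sum, ← Finset.sum_mul,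
    Finset.sum_const, Finset.card_univ, Fintype.card_fin, nsmul_eq_mul, hS]
  ring

lemma cs_double (a b : Fin N → Fin N → ℝ) (s : Fin N → Finset (Fin N)) :
    (∑ i, ∑ j ∈ s i, a i j * b i j)
      ≤ Real.sqrt (∑ i, ∑ j ∈ s i, (a i j)^2) * Real.sqrt (∑ i, ∑ j ∈ s i, (b i j)^2) :=
  calc (∑ i, ∑ j ∈ s i, a i j * b i j)
      ≤ ∑ i, Real.sqrt (∑ j ∈ s i, (a i j)^2) * Real.sqrt (∑ j ∈ s i, (b i j)^2) :=
        Finset.sum_le_sum fun i _ => Real.sum_mul_le_sqrt_mul_sqrt _ _ _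
    _ ≤ _ := Real.sum_sqrt_mul_sqrt_le Finset.univ
          (fun i => Finset.sum_nonneg fun j _ => sq_nonneg _)
          (fun i => Finset.sum_nonneg fun j _ => sq_nonneg _)

lemma anti_of_right_deriv_nonpos {f f' : ℝ → ℝ} {a b : ℝ}
    (hf : ContinuousOn f (Icc a b))
    (hd : ∀ t ∈ Ico a b, HasDerivWithinAt f (f' t) (Ici t) t)
    (h0 : ∀ t ∈ Ico a b, f' t ≤ 0) (hab : a ≤ b) : f b ≤ f a := by
  have := image_le_of_deriv_right_le_deriv_boundary (B := fun _ => f a) (B' := fun _ => 0)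
    hf hd le_rfl continuousOn_const (fun t _ => hasDerivWithinAt_const _ _ _) h0
  exact this ⟨hab, le_rfl⟩

end helpers
section core
variable {N : ℕ} {κ : ℝ} {x v : ℝ → Fin N → ℝ}

lemma velocity_decay (hN : 2 ≤ N) (hκ : 0 < κ)
    (hcol : ∀ t ≥ (0:ℝ), ∀ i j : Fin N, i ≠ j → x t i ≠ x t j)
    (hdx : ∀ i, ∀ t ≥ (0:ℝ), HasDerivWithinAt (fun s => x s i) (v t i) (Set.Ici 0) t)
    (hdv : ∀ i, ∀ t ≥ (0:ℝ), HasDerivWithinAt (fun s => v s i)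
      ((κ / (N:ℝ)) * ∑ j ∈ Finset.univ.erase i,
        (v t j - v t i) / |x t j - x t i|) (Set.Ici 0) t)
    (hv0 : ∑ i, v 0 i = 0) :
    ∃ lam M : ℝ, 0 < lam ∧ 0 ≤ M ∧ ∀ i : Fin N, ∀ t ≥ (0:ℝ),
      |v t i| ≤ M * Real.exp (-lam * t) := by
  have hNpos : (0:ℝ) < N := by
    have : (0:ℕ) < N := by omega
    exact_mod_cast this
  set E : ℝ → ℝ := fun t => ∑ i, (v t i)^2 with hEdef
  set P : ℝ → ℝ := fun t => ∑ i, ∑ j ∈ Finset.univ.erase i, (x t i - x t j)^2 with hPdef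
  set E' : ℝ → ℝ := fun t => κ / N * -∑ i, ∑ j ∈ Finset.univ.erase i,
      (v t i - v t j)^2 * (|x t i - x t j|)⁻¹ with hE'def
  set P' : ℝ → ℝ := fun t => ∑ i, ∑ j ∈ Finset.univ.erase i,
      2 * ((x t i - x t j) * (v t i - v t j)) with hP'def
  -- derivative of E
  have hE' : ∀ t ≥ (0:ℝ), HasDerivWithinAt E (E' t) (Ici 0) t := by
    intro t ht
    have h1 : HasDerivWithinAt E (∑ i, 2 * v t i * ((κ / (N:ℝ)) *
        ∑ j ∈ Finset.univ.erase i, (v t j - v t i) / |x t j - x t i|)) (Ici 0) t := by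
      refine HasDerivWithinAt.fun_sum fun i _ => ?_
      have h2 := (hdv i t ht).pow 2
      refine h2.congr_deriv ?_
      push_cast
      ring
    convert h1 using 1
    have hsym := sym_identity (v t) (fun i j => (|x t i - x t j|)⁻¹)
      (fun i j => by
        show (|x t i - x t j|)⁻¹ = (|x t j - x t i|)⁻¹
        rw [abs_sub_comm])
    have hr : (∑ i, 2 * v t i * ((κ / (N:ℝ)) *
        ∑ j ∈ Finset.univ.erase i, (v t j - v t i) / |x t j - x t i|))
        = (2 * (κ / N)) * ∑ i, ∑ j ∈ Finset.univ.erase i,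
            v t i * (v t j - v t i) * (|x t i - x t j|)⁻¹ := by
      rw [Finset.mul_sum]
      refine Finset.sum_congr rfl fun i _ => ?_
      rw [Finset.mul_sum, Finset.mul_sum, Finset.mul_sum]
      refine Finset.sum_congr rfl fun j _ => ?_
      rw [abs_sub_comm (x t j) (x t i)]
      ring
    rw [hr, hsym]
    ring
  -- conservation of momentum
  have hSder : ∀ t ≥ (0:ℝ), HasDerivWithinAt (fun s => ∑ i, v s i) 0 (Ici 0) t := by
    intro t ht
    have h1 : HasDerivWithinAt (fun s => ∑ i, v s i)
        (∑ i, (κ / (N:ℝ)) * ∑ j ∈ Finset.univ.erase i,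
          (v t j - v t i) / |x t j - x t i|) (Ici 0) t :=
      HasDerivWithinAt.fun_sum fun i _ => hdv i t ht
    convert h1 using 1
    have hswap := erase_sum_swap (fun i j => (v t j - v t i) / |x t j - x t i|)
    have hz : (∑ i, ∑ j ∈ Finset.univ.erase i, (v t j - v t i) / |x t j - x t i|) = 0 := by
      have h2 : (∑ i, ∑ j ∈ Finset.univ.erase i, (v t j - v t i) / |x t j - x t i|)
          = -∑ i, ∑ j ∈ Finset.univ.erase i, (v t j - v t i) / |x t j - x t i| := by
        nth_rewrite 1 [hswap]
        rw [← Finset.sum_neg_distrib]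
        refine Finset.sum_congr rfl fun i _ => ?_
        rw [← Finset.sum_neg_distrib]
        refine Finset.sum_congr rfl fun j _ => ?_
        rw [abs_sub_comm (x t i) (x t j)]
        ring
      linarith
    rw [← Finset.mul_sum, hz, mul_zero]
  have hS : ∀ t ≥ (0:ℝ), ∑ i, v t i = 0 := by
    intro t ht
    have hc : ContinuousOn (fun s => ∑ i, v s i) (Icc 0 t) := fun s hs =>
      ((hSder s hs.1).continuousWithinAt).mono Icc_subset_Ici_self
    have hcst := constant_of_has_deriv_right_zero hc
      (fun s hs => (hSder s hs.1).mono (Ici_subset_Ici.mpr hs.1))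
    have := hcst t ⟨ht, le_rfl⟩
    rw [this, hv0]
  have hQ : ∀ t ≥ (0:ℝ),
      (∑ i, ∑ j ∈ Finset.univ.erase i, (v t i - v t j)^2) = 2 * N * E t :=
    fun t ht => sum_sq_pairs (v t) (hS t ht)
  have hEnn : ∀ t, 0 ≤ E t := fun t => Finset.sum_nonneg fun i _ => sq_nonneg _
  -- positivity of P
  obtain ⟨i0, j0, hij0⟩ : ∃ i j : Fin N, i ≠ j :=
    ⟨⟨0, by omega⟩, ⟨1, by omega⟩, by simp [Fin.ext_iff]⟩
  have hPpos : ∀ t ≥ (0:ℝ), 0 < P t := by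
    intro t ht
    have hne : x t i0 ≠ x t j0 := hcol t ht i0 j0 hij0
    have h1 : 0 < (x t i0 - x t j0)^2 := by
      have h2 : (x t i0 - x t j0) ≠ 0 := sub_ne_zero.mpr hne
      exact lt_of_le_of_ne (sq_nonneg _) (Ne.symm (pow_ne_zero 2 h2))
    have h3 : (x t i0 - x t j0)^2 ≤ ∑ j ∈ Finset.univ.erase i0, (x t i0 - x t j)^2 :=
      Finset.single_le_sum (f := fun j => (x t i0 - x t j)^2) (fun j _ => sq_nonneg _)
        (Finset.mem_erase.mpr ⟨Ne.symm hij0, Finset.mem_univ _⟩)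
    have h4 : (∑ j ∈ Finset.univ.erase i0, (x t i0 - x t j)^2) ≤ P t :=
      Finset.single_le_sum (f := fun i => ∑ j ∈ Finset.univ.erase i, (x t i - x t j)^2)
        (fun i _ => Finset.sum_nonneg fun j _ => sq_nonneg _) (Finset.mem_univ i0)
    linarith
  have hpair : ∀ t ≥ (0:ℝ), ∀ i j, i ≠ j → |x t i - x t j| ≤ Real.sqrt (P t) := by
    intro t ht i j hij
    have h1 : (x t i - x t j)^2 ≤ ∑ j' ∈ Finset.univ.erase i, (x t i - x t j')^2 :=
      Finset.single_le_sum (f := fun j' => (x t i - x t j')^2) (fun j' _ => sq_nonneg _)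
        (Finset.mem_erase.mpr ⟨Ne.symm hij, Finset.mem_univ _⟩)
    have h2 : (∑ j' ∈ Finset.univ.erase i, (x t i - x t j')^2) ≤ P t :=
      Finset.single_le_sum (f := fun i' => ∑ j' ∈ Finset.univ.erase i', (x t i' - x t j')^2)
        (fun i' _ => Finset.sum_nonneg fun j' _ => sq_nonneg _) (Finset.mem_univ i)
    calc |x t i - x t j| = Real.sqrt ((x t i - x t j)^2) := (Real.sqrt_sq_eq_abs _).symm
      _ ≤ Real.sqrt (P t) := Real.sqrt_le_sqrt (by linarith)
  -- derivative of P
  have hP' : ∀ t ≥ (0:ℝ), HasDerivWithinAt P (P' t) (Ici 0) t := by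
    intro t ht
    refine HasDerivWithinAt.fun_sum fun i _ => ?_
    refine HasDerivWithinAt.fun_sum fun j _ => ?_
    have h2 := ((hdx i t ht).sub (hdx j t ht)).pow 2
    refine h2.congr_deriv ?_
    push_cast
    simp only [Pi.sub_apply]
    ring
  have hP'le : ∀ t ≥ (0:ℝ), P' t ≤ 2 * Real.sqrt (P t) * Real.sqrt (2 * N * E t) := by
    intro t ht
    have hcs := cs_double (fun i j => x t i - x t j) (fun i j => v t i - v t j)
      (fun i => Finset.univ.erase i)
    have h1 : P' t = 2 * ∑ i, ∑ j ∈ Finset.univ.erase i,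
        (x t i - x t j) * (v t i - v t j) := by
      rw [Finset.mul_sum]
      refine Finset.sum_congr rfl fun i _ => ?_
      rw [Finset.mul_sum]
    rw [h1]
    have h2 : (∑ i, ∑ j ∈ Finset.univ.erase i, (v t i - v t j)^2) = 2 * N * E t := hQ t ht
    calc 2 * ∑ i, ∑ j ∈ Finset.univ.erase i, (x t i - x t j) * (v t i - v t j)
        ≤ 2 * (Real.sqrt (∑ i, ∑ j ∈ Finset.univ.erase i, (x t i - x t j)^2)
            * Real.sqrt (∑ i, ∑ j ∈ Finset.univ.erase i, (v t i - v t j)^2)) := by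
          linarith [hcs]
      _ = 2 * Real.sqrt (P t) * Real.sqrt (2 * N * E t) := by rw [h2]; ring
  -- differential inequality for E
  have hE'le : ∀ t ≥ (0:ℝ), E' t ≤ -(2*κ) * E t / Real.sqrt (P t) := by
    intro t ht
    have hsP : 0 < Real.sqrt (P t) := Real.sqrt_pos.mpr (hPpos t ht)
    have h1 : (∑ i, ∑ j ∈ Finset.univ.erase i, (v t i - v t j)^2 * (Real.sqrt (P t))⁻¹)
        ≤ ∑ i, ∑ j ∈ Finset.univ.erase i, (v t i - v t j)^2 * (|x t i - x t j|)⁻¹ := by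
      refine Finset.sum_le_sum fun i _ => Finset.sum_le_sum fun j hj => ?_
      have hij : i ≠ j := Ne.symm (Finset.mem_erase.mp hj).1
      have habs : 0 < |x t i - x t j| :=
        abs_pos.mpr (sub_ne_zero.mpr (hcol t ht i j hij))
      refine mul_le_mul_of_nonneg_left ?_ (sq_nonneg _)
      exact inv_anti₀ habs (hpair t ht i j hij)
    have h2 : (∑ i, ∑ j ∈ Finset.univ.erase i, (v t i - v t j)^2 * (Real.sqrt (P t))⁻¹)
        = 2 * N * E t * (Real.sqrt (P t))⁻¹ := by
      rw [← hQ t ht, Finset.sum_mul]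
      exact Finset.sum_congr rfl fun i _ => (Finset.sum_mul _ _ _).symm
    have h3 : E' t ≤ κ / N * -(2 * N * E t * (Real.sqrt (P t))⁻¹) := by
      rw [hE'def]
      refine mul_le_mul_of_nonneg_left ?_ (by positivity)
      rw [← h2]
      linarith [h1, h2]
    calc E' t ≤ κ / N * -(2 * N * E t * (Real.sqrt (P t))⁻¹) := h3
      _ = -(2*κ) * E t / Real.sqrt (P t) := by
          field_simp
  have hE'np : ∀ t ≥ (0:ℝ), E' t ≤ 0 := by
    intro t ht
    have h1 : 0 ≤ ∑ i, ∑ j ∈ Finset.univ.erase i, (v t i - v t j)^2 * (|x t i - x t j|)⁻¹ :=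
      Finset.sum_nonneg fun i _ => Finset.sum_nonneg fun j _ => by positivity
    rw [hE'def]
    exact mul_nonpos_of_nonneg_of_nonpos (by positivity) (by linarith)
  have hEanti : ∀ s t : ℝ, 0 ≤ s → s ≤ t → E t ≤ E s := by
    intro s t hs hst
    refine anti_of_right_deriv_nonpos (f' := E') ?_ ?_ ?_ hst
    · exact fun u hu => ((hE' u (hs.trans hu.1)).continuousWithinAt).mono
        (fun z hz => hs.trans hz.1)
    · exact fun u hu => (hE' u (hs.trans hu.1)).mono (Ici_subset_Ici.mpr (hs.trans hu.1))
    · exact fun u hu => hE'np u (hs.trans hu.1)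
  -- Lyapunov bound for P
  set Pm : ℝ := Real.exp ((2/κ) * (Real.sqrt (2*N*E 0) + κ/2 * Real.log (P 0))) with hPmdef
  have hPm0 : P 0 ≤ Pm := by
    have h1 : Real.log (P 0) ≤ (2/κ) * (Real.sqrt (2*N*E 0) + κ/2 * Real.log (P 0)) := by
      have h2 : 0 ≤ (2/κ) * Real.sqrt (2*N*E 0) := by positivity
      have h3 : (2/κ) * (κ/2 * Real.log (P 0)) = Real.log (P 0) := by
        field_simp
      nlinarith [h2, h3]
    calc P 0 = Real.exp (Real.log (P 0)) := (Real.exp_log (hPpos 0 le_rfl)).symm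
      _ ≤ Pm := Real.exp_le_exp.mpr h1
  have hLyap : ∀ b ≥ (0:ℝ), (∀ u ∈ Icc (0:ℝ) b, 0 < E u) → P b ≤ Pm := by
    intro b hb hpos
    set L : ℝ → ℝ := fun t => Real.sqrt (2*N*E t) + κ/2 * Real.log (P t) with hLdef
    set L' : ℝ → ℝ := fun t =>
      1/(2*Real.sqrt (2*N*E t)) * (2*N*E' t) + κ/2 * ((P t)⁻¹ * P' t) with hL'def
    have hLd : ∀ t ∈ Icc (0:ℝ) b, HasDerivWithinAt L (L' t) (Ici 0) t := by
      intro t htm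
      have ht : (0:ℝ) ≤ t := htm.1
      have hEt : 0 < E t := hpos t htm
      have h1 : HasDerivWithinAt (fun s => 2*(N:ℝ)*E s) (2*N*E' t) (Ici 0) t :=
        (hE' t ht).const_mul (2*(N:ℝ))
      have h2 := (Real.hasDerivAt_sqrt
        (ne_of_gt (by positivity : (0:ℝ) < 2*N*E t))).comp_hasDerivWithinAt t h1
      have h3 := ((Real.hasDerivAt_log
        (ne_of_gt (hPpos t ht))).comp_hasDerivWithinAt t (hP' t ht)).const_mul (κ/2)
      exact h2.add h3
    have hL'np : ∀ u ∈ Ico (0:ℝ) b, L' u ≤ 0 := by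
      intro u hu
      have hu0 : (0:ℝ) ≤ u := hu.1
      have hEu : 0 < E u := hpos u ⟨hu.1, hu.2.le⟩
      have hW : 0 < Real.sqrt (2*N*E u) := Real.sqrt_pos.mpr (by positivity)
      have hR : 0 < Real.sqrt (P u) := Real.sqrt_pos.mpr (hPpos u hu0)
      set W := Real.sqrt (2*N*E u) with hWdef
      set R := Real.sqrt (P u) with hRdef
      have hW2 : W^2 = 2*N*E u := Real.sq_sqrt (by positivity)
      have hR2 : R^2 = P u := Real.sq_sqrt (hPpos u hu0).le
      have key : E' u ≤ -(2*κ) * E u / R := hE'le u hu0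
      have hP'u : P' u ≤ 2*R*W := hP'le u hu0
      have hgoal : L' u = 1/(2*W) * (2*N*E' u) + κ/2 * ((P u)⁻¹ * P' u) := by
        simp only [hL'def, hWdef]
      rw [hgoal]
      have hterm1 : 1/(2*W) * (2*N*E' u) ≤ -(κ*W/R) := by
        have e1 : 1/(2*W) * (2*N*E' u) = (N * E' u)/W := by
          field_simp
        have e2 : (N * E' u)/W ≤ (N * (-(2*κ) * E u / R))/W :=
          (div_le_div_iff_of_pos_right hW).mpr (mul_le_mul_of_nonneg_left key hNpos.le)
        have e3 : (N * (-(2*κ) * E u / R))/W = -(κ*W/R) := by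
          rw [← neg_div, div_eq_div_iff hW.ne' hR.ne', mul_assoc,
            div_mul_cancel₀ _ hR.ne']
          linear_combination κ * hW2
        rw [e1, ← e3]
        exact e2
      have hterm2 : κ/2 * ((P u)⁻¹ * P' u) ≤ (κ*W)/R := by
        have ha : (P u)⁻¹ * P' u ≤ (P u)⁻¹ * (2*R*W) :=
          mul_le_mul_of_nonneg_left hP'u (by positivity)
        have hb2 : (P u)⁻¹ * (2*R*W) = 2*W/R := by
          rw [← hR2]
          field_simp
        have hc : κ/2 * ((P u)⁻¹ * P' u) ≤ κ/2 * (2*W/R) := by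
          rw [← hb2]
          exact mul_le_mul_of_nonneg_left ha (by positivity)
        calc κ/2 * ((P u)⁻¹ * P' u) ≤ κ/2 * (2*W/R) := hc
          _ = κ*W/R := by ring
      linarith
    have hLanti : L b ≤ L 0 := by
      refine anti_of_right_deriv_nonpos (f' := L') ?_ ?_ ?_ hb
      · exact fun u hu => ((hLd u hu).continuousWithinAt).mono (fun z hz => hz.1)
      · exact fun u hu => (hLd u ⟨hu.1, hu.2.le⟩).mono (Ici_subset_Ici.mpr hu.1)
      · exact hL'np
    have h4 : κ/2 * Real.log (P b) ≤ L 0 := by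
      have h5 : 0 ≤ Real.sqrt (2*N*E b) := Real.sqrt_nonneg _
      have h6 : L b = Real.sqrt (2*N*E b) + κ/2 * Real.log (P b) := by simp only [hLdef]
      linarith [hLanti, h6 ▸ hLanti]
    have h5 : Real.log (P b) ≤ (2/κ) * L 0 := by
      have h6 := mul_le_mul_of_nonneg_left h4 (le_of_lt (by positivity : (0:ℝ) < 2/κ))
      have h7 : (2/κ) * (κ/2 * Real.log (P b)) = Real.log (P b) := by field_simp
      linarith [h6, h7]
    calc P b = Real.exp (Real.log (P b)) := (Real.exp_log (hPpos b hb)).symm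
      _ ≤ Pm := Real.exp_le_exp.mpr h5
  -- uniform bound on P
  have hPbound : ∀ b ≥ (0:ℝ), P b ≤ Pm := by
    intro b hb
    by_cases hall : ∀ u ∈ Icc (0:ℝ) b, 0 < E u
    · exact hLyap b hb hall
    · push_neg at hall
      obtain ⟨u₀, hu₀, hEu₀⟩ := hall
      set Zs : Set ℝ := Icc (0:ℝ) b ∩ E ⁻¹' {0} with hZdef
      have hZne : Zs.Nonempty :=
        ⟨u₀, hu₀, by simp [le_antisymm hEu₀ (hEnn u₀)]⟩
      have hEcont : ContinuousOn E (Icc (0:ℝ) b) := fun s hs =>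
        ((hE' s hs.1).continuousWithinAt).mono (fun z hz => hz.1)
      have hZclosed : IsClosed Zs :=
        hEcont.preimage_isClosed_of_isClosed isClosed_Icc isClosed_singleton
      have hZbdd : BddBelow Zs := ⟨0, fun z hz => hz.1.1⟩
      set T := sInf Zs with hTdef
      have hTmem : T ∈ Zs := hZclosed.csInf_mem hZne hZbdd
      have hT0 : 0 ≤ T := hTmem.1.1
      have hTb : T ≤ b := hTmem.1.2
      have hET : E T = 0 := hTmem.2
      have hEpos_before : ∀ u : ℝ, 0 ≤ u → u < T → 0 < E u := by
        intro u hu0 huT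
        rcases (hEnn u).lt_or_eq with h | h
        · exact h
        · exfalso
          have : u ∈ Zs := ⟨⟨hu0, huT.le.trans hTb⟩, by simp [h.symm]⟩
          exact absurd (csInf_le hZbdd this) (not_le.mpr huT)
      have hPT : P T ≤ Pm := by
        rcases eq_or_lt_of_le hT0 with h0 | h0
        · rw [← h0]
          exact hPm0
        · have hc : ∀ c : ℝ, 0 ≤ c → c < T → P c ≤ Pm := fun c hc0 hcT =>
            hLyap c hc0 (fun u hu => hEpos_before u hu.1 (lt_of_le_of_lt hu.2 hcT))
          have hPc : ContinuousWithinAt P (Ico 0 T) T :=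
            ((hP' T hT0).continuousWithinAt).mono (fun z hz => hz.1)
          have hne : (nhdsWithin T (Ico (0:ℝ) T)).NeBot := by
            rw [← mem_closure_iff_nhdsWithin_neBot, closure_Ico (ne_of_lt h0)]
            exact ⟨hT0, le_rfl⟩
          exact le_of_tendsto hPc
            (eventually_nhdsWithin_of_forall (fun c hc' => hc c hc'.1 hc'.2))
      have hEzero : ∀ u : ℝ, T ≤ u → E u = 0 :=
        fun u h1 => le_antisymm (hET ▸ hEanti T u hT0 h1) (hEnn u)
      have hvzero : ∀ i : Fin N, ∀ u : ℝ, T ≤ u → v u i = 0 := by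
        intro i u h1
        have h2 : (v u i)^2 ≤ E u :=
          Finset.single_le_sum (f := fun j => (v u j)^2) (fun j _ => sq_nonneg _)
            (Finset.mem_univ i)
        have h3 : (v u i)^2 = 0 := le_antisymm (by rw [← hEzero u h1]; exact h2) (sq_nonneg _)
        exact pow_eq_zero_iff (by norm_num) |>.mp h3
      have hxconst : ∀ i, x b i = x T i := by
        intro i
        have := constant_of_has_deriv_right_zero (f := fun s => x s i) (a := T) (b := b)
          (fun s hs => ((hdx i s (hT0.trans hs.1)).continuousWithinAt).mono
            (fun z hz => hT0.trans hz.1))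
          (fun s hs => by
            have h := (hdx i s (hT0.trans hs.1)).mono (Ici_subset_Ici.mpr (hT0.trans hs.1))
            rwa [hvzero i s hs.1] at h)
        exact this b ⟨hTb, le_rfl⟩
      have hPb : P b = P T := by
        simp only [hPdef]
        exact Finset.sum_congr rfl fun i _ => Finset.sum_congr rfl fun j _ => by
          rw [hxconst i, hxconst j]
      rw [hPb]
      exact hPT
  -- exponential decay of E
  have hPmpos : 0 < Pm := Real.exp_pos _
  set Rm : ℝ := Real.sqrt Pm with hRmdef
  have hRmpos : 0 < Rm := Real.sqrt_pos.mpr hPmpos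
  set lam : ℝ := κ / Rm with hlamdef
  have hlam : 0 < lam := by positivity
  have hE'le2 : ∀ t ≥ (0:ℝ), E' t ≤ -(2*lam) * E t := by
    intro t ht
    have h1 := hE'le t ht
    rw [neg_mul, neg_div] at h1
    have hsP : 0 < Real.sqrt (P t) := Real.sqrt_pos.mpr (hPpos t ht)
    have h2 : Real.sqrt (P t) ≤ Rm := Real.sqrt_le_sqrt (hPbound t ht)
    have h3 : 2*κ * E t / Rm ≤ 2*κ * E t / Real.sqrt (P t) := by
      gcongr
    have h6 : -(2*lam) * E t = -(2*κ * E t / Rm) := by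
      rw [hlamdef]
      field_simp
    rw [h6]
    have h1' : E' t ≤ -(2*κ * E t / Real.sqrt (P t)) := by
      have e : (2*κ) * E t = 2*κ*E t := by ring
      rw [e] at h1
      exact h1
    linarith
  have hdecay : ∀ t ≥ (0:ℝ), E t ≤ E 0 * Real.exp (-(2*lam)*t) := by
    intro t ht
    set G : ℝ → ℝ := fun s => E s * Real.exp (2*lam*s) with hGdef
    set G' : ℝ → ℝ := fun u =>
      E' u * Real.exp (2*lam*u) + E u * (Real.exp (2*lam*u) * (2*lam)) with hG'def
    have hG' : ∀ u ≥ (0:ℝ), HasDerivWithinAt G (G' u) (Ici 0) u := by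
      intro u hu
      have h1 : HasDerivAt (fun s : ℝ => 2*lam*s) (2*lam) u := by
        simpa using (hasDerivAt_id u).const_mul (2*lam)
      have hexp := h1.exp
      exact (hE' u hu).mul hexp.hasDerivWithinAt
    have hGanti : G t ≤ G 0 := by
      refine anti_of_right_deriv_nonpos (f' := G') ?_ ?_ ?_ ht
      · exact fun u hu => ((hG' u hu.1).continuousWithinAt).mono (fun z hz => hz.1)
      · exact fun u hu => (hG' u hu.1).mono (Ici_subset_Ici.mpr hu.1)
      · intro u hu
        have h1 := hE'le2 u hu.1
        have h2 : (0:ℝ) < Real.exp (2*lam*u) := Real.exp_pos _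
        have h3 : E' u + 2*lam*E u ≤ 0 := by linarith
        have h4 : (E' u + 2*lam*E u) * Real.exp (2*lam*u) ≤ 0 :=
          mul_nonpos_of_nonpos_of_nonneg h3 h2.le
        have h5 : G' u = (E' u + 2*lam*E u) * Real.exp (2*lam*u) := by
          simp only [hG'def]
          ring
        rw [h5]
        exact h4
    have hG0 : G 0 = E 0 := by simp [hGdef]
    have h5 : E t * Real.exp (2*lam*t) ≤ E 0 := by
      have e1 : G t = E t * Real.exp (2*lam*t) := by simp only [hGdef]
      rw [← e1, ← hG0]
      exact hGanti
    have h6 : (0:ℝ) < Real.exp (2*lam*t) := Real.exp_pos _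
    have h7 : E t ≤ E 0 / Real.exp (2*lam*t) := (le_div_iff₀ h6).mpr h5
    calc E t ≤ E 0 / Real.exp (2*lam*t) := h7
      _ = E 0 * Real.exp (-(2*lam)*t) := by
          rw [div_eq_mul_inv, ← Real.exp_neg, neg_mul]
  refine ⟨lam, Real.sqrt (E 0), hlam, Real.sqrt_nonneg _, ?_⟩
  intro i t ht
  have h1 : (v t i)^2 ≤ E t :=
    Finset.single_le_sum (f := fun j => (v t j)^2) (fun j _ => sq_nonneg _) (Finset.mem_univ i)
  have h2 : E t ≤ E 0 * Real.exp (-(2*lam)*t) := hdecay t ht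
  have h3 : E 0 * Real.exp (-(2*lam)*t) = (Real.sqrt (E 0) * Real.exp (-lam*t))^2 := by
    rw [mul_pow, Real.sq_sqrt (hEnn 0)]
    congr 1
    rw [← Real.exp_nat_mul]
    congr 1
    push_cast
    ring
  calc |v t i| = Real.sqrt ((v t i)^2) := (Real.sqrt_sq_eq_abs _).symm
    _ ≤ Real.sqrt ((Real.sqrt (E 0) * Real.exp (-lam*t))^2) :=
        Real.sqrt_le_sqrt (by linarith)
    _ = |Real.sqrt (E 0) * Real.exp (-lam*t)| := Real.sqrt_sq_eq_abs _
    _ = Real.sqrt (E 0) * Real.exp (-lam*t) := abs_of_nonneg (by positivity)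




lemma pos_increment (hlam : 0 < lam) (hM : 0 ≤ M)
    (hdx : ∀ i, ∀ t ≥ (0:ℝ), HasDerivWithinAt (fun s => x s i) (v t i) (Set.Ici 0) t)
    (hvdecay : ∀ i : Fin N, ∀ t ≥ (0:ℝ), |v t i| ≤ M * Real.exp (-lam * t)) :
    ∀ i : Fin N, ∀ s t : ℝ, 0 ≤ s → s ≤ t →
      |x t i - x s i| ≤ M/lam * Real.exp (-lam*s) := by
  intro i s t hs hst
  have key : ∀ (f : ℝ → ℝ) (f' : ℝ → ℝ),
      (∀ u ≥ (0:ℝ), HasDerivWithinAt f (f' u) (Ici 0) u) →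
      (∀ u ≥ (0:ℝ), f' u ≤ M * Real.exp (-lam*u)) →
      f t - f s ≤ M/lam * (Real.exp (-lam*s) - Real.exp (-lam*t)) := by
    intro f f' hd hb
    set B : ℝ → ℝ := fun u => f s + M/lam * (Real.exp (-lam*s) - Real.exp (-lam*u)) with hBdef
    have hB' : ∀ u : ℝ, HasDerivAt B (M * Real.exp (-lam*u)) u := by
      intro u
      have h1 : HasDerivAt (fun u : ℝ => -lam*u) (-lam) u := by
        simpa using (hasDerivAt_id u).const_mul (-lam)
      have h2 := h1.exp
      have h4 : HasDerivAt (fun u => Real.exp (-lam*s) - Real.exp (-lam*u))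
          (-(Real.exp (-lam*u) * (-lam))) u := h2.const_sub (Real.exp (-lam*s))
      have h5 := (h4.const_mul (M/lam)).const_add (f s)
      refine h5.congr_deriv ?_
      rw [mul_neg, mul_neg, mul_neg, neg_neg, mul_comm (Real.exp _) lam, ← mul_assoc, div_mul_cancel₀ M hlam.ne']
    have h := image_le_of_deriv_right_le_deriv_boundary (a := s) (b := t)
      (f := f) (f' := f') (B := B) (B' := fun u => M * Real.exp (-lam*u))
      (fun u hu => ((hd u (hs.trans hu.1)).continuousWithinAt).mono
        (fun z hz => hs.trans hz.1))
      (fun u hu => (hd u (hs.trans hu.1)).mono (Ici_subset_Ici.mpr (hs.trans hu.1)))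
      (by simp [hBdef])
      (fun u _ => (hB' u).continuousAt.continuousWithinAt)
      (fun u _ => (hB' u).hasDerivWithinAt)
      (fun u hu => hb u (hs.trans hu.1))
    have h2 := h ⟨hst, le_rfl⟩
    simp only [hBdef] at h2
    linarith
  have hup := key (fun u => x u i) (fun u => v u i) (hdx i)
    (fun u hu => le_trans (le_abs_self _) (hvdecay i u hu))
  have hdown := key (fun u => -x u i) (fun u => -(v u i))
    (fun u hu => (hdx i u hu).neg)
    (fun u hu => le_trans (neg_le_abs _) (hvdecay i u hu))
  have habs : |x t i - x s i| ≤ M/lam * (Real.exp (-lam*s) - Real.exp (-lam*t)) := by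
    rw [abs_le]
    constructor
    · linarith
    · linarith
  have hexp_t : 0 < Real.exp (-lam*t) := Real.exp_pos _
  have hMl : 0 ≤ M/lam := by positivity
  have expand : M/lam*(Real.exp (-lam*s) - Real.exp (-lam*t))
      = M/lam*Real.exp (-lam*s) - M/lam*Real.exp (-lam*t) := by ring
  nlinarith [habs, mul_nonneg hMl hexp_t.le]

end core

/-- Unconditional flocking with exponential rate at the critical exponent `β = 1`. -/
theorem stmt18 (N : ℕ) (hN : 2 ≤ N) (κ : ℝ) (hκ : 0 < κ)
    (x v : ℝ → Fin N → ℝ) (hxv : IsCFSol2Crit N κ x v)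
    (hx0 : ∑ i, x 0 i = 0) (hv0 : ∑ i, v 0 i = 0)
    (hsep : ∀ i j : Fin N, i ≠ j → x 0 i ≠ x 0 j) :
    ∃ Xinf : Fin N → ℝ, ∃ C C' lam : ℝ, 0 < C ∧ 0 < C' ∧ 0 < lam ∧
      ∀ i : Fin N, ∀ t ≥ (0:ℝ),
        |x t i - Xinf i| ≤ C * Real.exp (-lam * t) ∧
        |v t i| ≤ C' * Real.exp (-lam * t) := by
  obtain ⟨hcol, hdx, hdv⟩ := hxv
  obtain ⟨lam, M, hlam, hM, hvdecay⟩ := velocity_decay hN hκ hcol hdx hdv hv0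
  have hinc := pos_increment hlam hM hdx hvdecay
  have hex : ∀ i : Fin N, ∃ L : ℝ, Tendsto (fun n : ℕ => x n i) atTop (nhds L) := by
    intro i
    have hcauchy : CauchySeq (fun n : ℕ => x n i) := by
      apply cauchySeq_of_le_tendsto_0 (b := fun n : ℕ => M/lam * Real.exp (-lam*n))
      · intro n m K hn hm
        have hmono : ∀ a b : ℕ, a ≤ b → K ≤ a →
            dist (x (b:ℝ) i) (x (a:ℝ) i) ≤ M/lam * Real.exp (-lam*K) := by
          intro a b hab hKa
          rw [Real.dist_eq]
          have h1 := hinc i a b (by positivity) (by exact_mod_cast hab)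
          have h2 : Real.exp (-lam*(a:ℝ)) ≤ Real.exp (-lam*(K:ℝ)) := by
            apply Real.exp_le_exp.mpr
            have : (K:ℝ) ≤ a := by exact_mod_cast hKa
            nlinarith
          have hMl : 0 ≤ M/lam := by positivity
          calc |x (b:ℝ) i - x (a:ℝ) i| ≤ M/lam * Real.exp (-lam*(a:ℝ)) := h1
            _ ≤ M/lam * Real.exp (-lam*(K:ℝ)) := by nlinarith
        rcases le_total n m with h | h
        · rw [dist_comm]
          exact hmono n m h hn
        · exact hmono m n h hm
      · have h1 : Tendsto (fun n : ℕ => Real.exp (-lam) ^ n) atTop (nhds 0) :=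
          tendsto_pow_atTop_nhds_zero_of_lt_one (Real.exp_nonneg _)
            (Real.exp_lt_one_iff.mpr (by linarith))
        have h2 := h1.const_mul (M/lam)
        rw [mul_zero] at h2
        convert h2 using 2 with n
        rw [← Real.exp_nat_mul]
        congr 1
        ring
    exact cauchySeq_tendsto_of_complete hcauchy
  choose Xinf hX using hex
  refine ⟨Xinf, M/lam + 1, M + 1, lam, by positivity, by positivity, hlam, ?_⟩
  intro i t ht
  have hexp : 0 < Real.exp (-lam*t) := Real.exp_pos _
  constructor
  · have hlim : Tendsto (fun n : ℕ => |x (n:ℝ) i - x t i|) atTop (nhds (|Xinf i - x t i|)) :=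
      ((hX i).sub_const (x t i)).abs
    have hev : ∀ᶠ n : ℕ in atTop, |x (n:ℝ) i - x t i| ≤ M/lam * Real.exp (-lam*t) := by
      filter_upwards [eventually_ge_atTop ⌈t⌉₊] with n hn
      have h3 : t ≤ (n:ℝ) := le_trans (Nat.le_ceil t) (by exact_mod_cast hn)
      have h4 := hinc i t n ht h3
      exact h4
    have h1 : |Xinf i - x t i| ≤ M/lam * Real.exp (-lam*t) := le_of_tendsto hlim hev
    rw [abs_sub_comm]
    nlinarith
  · have h5 := hvdecay i t ht
    nlinarith
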